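/- arXiv:1212.6019 — 3 statements merged into one kernel-verified Lean document; each statement's English description precedes it below -/
import Mathlib

section
/- If a group G acts on a finite nonempty connected tree (a finite connected simple graph with no cycles) by graph automorphisms, then G fixes a vertex or fixes an edge (as an unordered pair of vertices). -/
open SimpleGraph

/-- An internal vertex of a path has two distinct neighbors. -/
private lemma internal_two_nbrs {V : Type*} {G : SimpleGraph V} :
    ∀ {u v : V} (p : G.Walk u v), p.IsPath → ∀ {w : V}, w ∈ p.support → w ≠ u → w ≠ v →
      ∃ a b, a ≠ b ∧ G.Adj w a ∧ G.Adj w b := by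
  intro u v p
  induction p with
  | nil => intro _ w hw hwu _; simp at hw; exact absurd hw hwu
  | @cons u b v h q ih =>
    intro hp w hw hwu hwv
    rw [SimpleGraph.Walk.cons_isPath_iff] at hp
    rw [SimpleGraph.Walk.support_cons, List.mem_cons] at hw
    rcases hw with rfl | hw
    · exact absurd rfl hwu
    by_cases hwb : w = b
    · subst hwb
      -- w = b, neighbors: u and next vertex of q
      cases q with
      | nil => exact absurd rfl hwv
      | @cons _ c _ h' q' =>
        refine ⟨u, c, ?_, h.symm, h'⟩
        intro huc
        apply hp.2
        rw [huc, SimpleGraph.Walk.support_cons]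
        exact List.mem_cons_of_mem _ q'.start_mem_support
    · exact ih hp.1 hw hwb hwv

/-- A walk whose support lies in `s` gives reachability in the induced graph. -/
private lemma reach_induce {V : Type*} {G : SimpleGraph V} {s : Set V} :
    ∀ {u v : V} (p : G.Walk u v) (hs : ∀ w ∈ p.support, w ∈ s),
      (G.induce s).Reachable ⟨u, hs u p.start_mem_support⟩ ⟨v, hs v p.end_mem_support⟩ := by
  intro u v p
  induction p with
  | nil => intro hs; rfl
  | @cons u b v h q ih =>
    intro hs
    have hb : b ∈ s := hs b (by simp [SimpleGraph.Walk.support_cons, q.start_mem_support])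
    have hs' : ∀ w ∈ q.support, w ∈ s := fun w hw =>
      hs w (by rw [SimpleGraph.Walk.support_cons]; exact List.mem_cons_of_mem _ hw)
    have hadj : (G.induce s).Adj ⟨u, hs u ((Walk.cons h q).start_mem_support)⟩ ⟨b, hb⟩ := by
      simp only [SimpleGraph.comap_adj, Function.Embedding.coe_subtype]
      exact h
    exact hadj.reachable.trans (ih hs')

private lemma acyclic_induce {V : Type*} {G : SimpleGraph V} (s : Set V)
    (hacyc : G.IsAcyclic) : (G.induce s).IsAcyclic := by
  intro v c hc
  exact hacyc (c.map (SimpleGraph.Embedding.induce (G := G) s).toHom)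
    ((SimpleGraph.Walk.map_isCycle_iff_of_injective
      (SimpleGraph.Embedding.induce (G := G) s).injective).2 hc)

private theorem aux_fixed : ∀ (n : ℕ) (V : Type*) [Fintype V] (G : SimpleGraph V)
    (Γ : Type*) [Group Γ] [MulAction Γ V], Fintype.card V = n → Nonempty V →
    G.Connected → G.IsAcyclic →
    (∀ (γ : Γ) (u v : V), G.Adj (γ • u) (γ • v) ↔ G.Adj u v) →
    (∃ v : V, ∀ γ : Γ, γ • v = v) ∨
      (∃ u v : V, G.Adj u v ∧ ∀ γ : Γ, s(γ • u, γ • v) = s(u, v)) := by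
  intro n
  induction n using Nat.strong_induction_on with
  | _ n ih =>
  intro V _ G Γ _ _ hcard hne hconn hacyc hact
  classical
  obtain ⟨v0⟩ := hne
  have htree : G.IsTree := ⟨hconn, hacyc⟩
  -- degree is preserved by the action
  have hdegle : ∀ (γ : Γ) (v : V), G.degree v ≤ G.degree (γ • v) := by
    intro γ v
    rw [← SimpleGraph.card_neighborFinset_eq_degree, ← SimpleGraph.card_neighborFinset_eq_degree]
    apply Finset.card_le_card_of_injOn (fun w => γ • w)
    · intro w hw
      rw [Finset.mem_coe, SimpleGraph.mem_neighborFinset] at hw ⊢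
      exact (hact γ v w).2 hw
    · intro a _ b _ hab
      exact smul_left_cancel γ hab
  have hdeg : ∀ (γ : Γ) (v : V), G.degree (γ • v) = G.degree v := by
    intro γ v
    refine le_antisymm ?_ (hdegle γ v)
    have := hdegle γ⁻¹ (γ • v)
    rwa [inv_smul_smul] at this
  set s : Set V := {v | 2 ≤ G.degree v} with hs_def
  by_cases hs : s.Nonempty
  · -- recursive case: prune leaves, recurse on interior s
    -- there is a vertex not in s (a leaf), since the tree has n-1 edges
    have hleaf : ∃ v, v ∉ s := by
      by_contra h
      push_neg at h
      have hsum : ∑ v, G.degree v = 2 * G.edgeFinset.card :=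
        SimpleGraph.sum_degrees_eq_twice_card_edges G
      have hE : G.edgeFinset.card + 1 = Fintype.card V := htree.card_edgeFinset
      have h2n : 2 * Fintype.card V ≤ ∑ v, G.degree v := by
        calc 2 * Fintype.card V = ∑ _v : V, 2 := by
              rw [Finset.sum_const, Finset.card_univ, smul_eq_mul, mul_comm]
          _ ≤ ∑ v, G.degree v := Finset.sum_le_sum fun v _ => h v
      rw [hsum] at h2n
      omega
    obtain ⟨vleaf, hvleaf⟩ := hleaf
    have hcard_lt : Fintype.card ↥s < n := by
      rw [← hcard]
      have : s ⊂ Set.univ := Set.ssubset_univ_iff.2 fun h => hvleaf (by rw [h]; trivial)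
      calc Fintype.card ↥s = s.toFinset.card := Set.toFinset_card s ▸ rfl
        _ < Fintype.card V := Finset.card_lt_card (by
            rw [Finset.ssubset_univ_iff]
            intro hh
            exact hvleaf (by rw [← Set.mem_toFinset, hh]; exact Finset.mem_univ _)) |>.trans_le
          (by rw [Finset.card_univ])
    -- the action restricts to s
    have hmem_smul : ∀ (γ : Γ) (v : V), v ∈ s → γ • v ∈ s := by
      intro γ v hv
      show 2 ≤ G.degree (γ • v)
      rw [hdeg]; exact hv
    letI smul' : SMul Γ ↥s := ⟨fun γ v => ⟨γ • v.1, hmem_smul γ v.1 v.2⟩⟩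
    letI : MulAction Γ ↥s :=
      { one_smul := fun v => Subtype.ext (one_smul Γ v.1)
        mul_smul := fun γ δ v => Subtype.ext (mul_smul γ δ v.1) }
    have hsmul_coe : ∀ (γ : Γ) (v : ↥s), ((γ • v : ↥s) : V) = γ • (v : V) := fun _ _ => rfl
    -- the induced graph on s is a nonempty connected acyclic graph
    have hconn' : (G.induce s).Connected := by
      rw [SimpleGraph.connected_iff]
      refine ⟨fun a b => ?_, hs.to_subtype⟩
      obtain ⟨p⟩ := hconn.preconnected a.1 b.1
      have hsupp : ∀ w ∈ (p.toPath : G.Walk a.1 b.1).support, w ∈ s := by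
        intro w hw
        by_cases hwa : w = a.1
        · exact hwa ▸ a.2
        by_cases hwb : w = b.1
        · exact hwb ▸ b.2
        obtain ⟨x, y, hxy, hx, hy⟩ :=
          internal_two_nbrs (p.toPath : G.Walk a.1 b.1) p.toPath.2 hw hwa hwb
        show 2 ≤ G.degree w
        rw [← SimpleGraph.card_neighborFinset_eq_degree]
        have : ({x, y} : Finset V) ⊆ G.neighborFinset w := by
          intro z hz
          rw [Finset.mem_insert, Finset.mem_singleton] at hz
          rcases hz with rfl | rfl <;> rw [SimpleGraph.mem_neighborFinset] <;> assumption
        calc 2 = ({x, y} : Finset V).card := (Finset.card_pair hxy).symm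
          _ ≤ (G.neighborFinset w).card := Finset.card_le_card this
      have := reach_induce (p.toPath : G.Walk a.1 b.1) hsupp
      simpa using this
    have hacyc' : (G.induce s).IsAcyclic := acyclic_induce s hacyc
    have hact' : ∀ (γ : Γ) (u v : ↥s),
        (G.induce s).Adj (γ • u) (γ • v) ↔ (G.induce s).Adj u v := by
      intro γ u v
      simp only [SimpleGraph.comap_adj, Function.Embedding.coe_subtype, hsmul_coe]
      exact hact γ u.1 v.1
    rcases ih (Fintype.card ↥s) hcard_lt ↥s (G.induce s) Γ rfl hs.to_subtype
        hconn' hacyc' hact' with ⟨v, hv⟩ | ⟨u, v, hadj, hfix⟩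
    · left
      exact ⟨v.1, fun γ => by rw [← hsmul_coe, hv γ]⟩
    · right
      refine ⟨u.1, v.1, hadj, fun γ => ?_⟩
      have := congrArg (Sym2.map (Subtype.val : ↥s → V)) (hfix γ)
      simpa [Sym2.map_pair_eq, hsmul_coe] using this
  · -- base case: all degrees ≤ 1, so n ≤ 2
    rw [Set.not_nonempty_iff_eq_empty] at hs
    have hdeg1 : ∀ v : V, G.degree v ≤ 1 := by
      intro v
      by_contra h
      push_neg at h
      exact (Set.eq_empty_iff_forall_notMem.1 hs v) h
    have hn2 : Fintype.card V ≤ 2 := by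
      have hsum : ∑ v, G.degree v = 2 * G.edgeFinset.card :=
        SimpleGraph.sum_degrees_eq_twice_card_edges G
      have hE : G.edgeFinset.card + 1 = Fintype.card V := htree.card_edgeFinset
      have hle : ∑ v, G.degree v ≤ Fintype.card V := by
        calc ∑ v, G.degree v ≤ ∑ _v : V, 1 := Finset.sum_le_sum fun v _ => hdeg1 v
          _ = Fintype.card V := by simp
      omega
    have hn1 : 1 ≤ Fintype.card V := Fintype.card_pos_iff.2 ⟨v0⟩
    interval_cases h : Fintype.card V
    · -- card = 1 : fix the unique vertex
      left
      refine ⟨v0, fun γ => ?_⟩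
      have : ∀ a b : V, a = b := fun a b => by
        have := Fintype.card_le_one_iff.1 (le_of_eq h)
        exact this a b
      exact this _ _
    · -- card = 2 : fix the unique edge
      right
      obtain ⟨u, v, huv, huniv⟩ := Nat.card_eq_two_iff.1 (show Nat.card V = 2 by rw [Nat.card_eq_fintype_card, h])
      have hall : ∀ w : V, w = u ∨ w = v := by
        intro w
        have : w ∈ ({u, v} : Set V) := by rw [huniv]; trivial
        simpa using this
      -- u and v are adjacent
      obtain ⟨p⟩ := hconn.preconnected u v
      have hnn : ¬p.Nil := SimpleGraph.Walk.not_nil_of_ne huv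
      have hadj0 : G.Adj u (p.getVert 1) := p.adj_snd hnn
      have hadj : G.Adj u v := by
        rcases hall (p.getVert 1) with h' | h'
        · exact absurd h' hadj0.ne'
        · exact h' ▸ hadj0
      refine ⟨u, v, hadj, fun γ => ?_⟩
      have hne : γ • u ≠ γ • v := fun hh => huv (smul_left_cancel γ hh)
      rcases hall (γ • u) with h1 | h1 <;> rcases hall (γ • v) with h2 | h2
      · exact absurd (h1.trans h2.symm) hne
      · rw [h1, h2]
      · rw [h1, h2]; exact Sym2.eq_swap
      · exact absurd (h1.trans h2.symm) hne

/-- If a group `Γ` acts on a finite nonempty connected tree (a finite connected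
simple graph with no cycles) by graph automorphisms, then `Γ` fixes a vertex or
fixes an edge (as an unordered pair of adjacent vertices). -/
theorem stmt_0 {V : Type*} [Fintype V] [Nonempty V] (G : SimpleGraph V)
    (hconn : G.Connected) (hacyc : G.IsAcyclic)
    {Γ : Type*} [Group Γ] [MulAction Γ V]
    (hact : ∀ (γ : Γ) (u v : V), G.Adj (γ • u) (γ • v) ↔ G.Adj u v) :
    (∃ v : V, ∀ γ : Γ, γ • v = v) ∨
      (∃ u v : V, G.Adj u v ∧ ∀ γ : Γ, s(γ • u, γ • v) = s(u, v)) := by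
  exact aux_fixed (Fintype.card V) V G Γ rfl ‹_› hconn hacyc hact
end

section
/- Let R be a commutative ring given as a pullback (fiber product) of commutative rings R1 ×_S R2 along ring homomorphisms f1 : R1 → S and f2 : R2 → S, where f2 is surjective. Then the induced square of unit groups is a pullback: R^× is isomorphic to the fiber product of R1^× and R2^× over S^×, i.e., the group of pairs (u1, u2) with f1(u1) = f2(u2). -/
/-- Let `R = R₁ ×_S R₂` be the fiber product of commutative rings along
`f₁ : R₁ → S` and `f₂ : R₂ → S` with `f₂` surjective. Then the induced square
of unit groups is a pullback: the natural map `Rˣ → R₁ˣ × R₂ˣ` is injective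
with image exactly the pairs `(u₁, u₂)` with `f₁(u₁) = f₂(u₂)`; that is, `Rˣ`
is isomorphic to the fiber product `R₁ˣ ×_{Sˣ} R₂ˣ`. -/
theorem stmt_2 (R₁ R₂ S : Type*) [CommRing R₁] [CommRing R₂] [CommRing S]
    (f₁ : R₁ →+* S) (f₂ : R₂ →+* S) (hf₂ : Function.Surjective f₂) :
    let R : Subring (R₁ × R₂) :=
      RingHom.eqLocus (f₁.comp (RingHom.fst R₁ R₂)) (f₂.comp (RingHom.snd R₁ R₂))
    let g₁ : R →+* R₁ := (RingHom.fst R₁ R₂).comp R.subtype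
    let g₂ : R →+* R₂ := (RingHom.snd R₁ R₂).comp R.subtype
    let Φ : Rˣ →* R₁ˣ × R₂ˣ :=
      (Units.map g₁.toMonoidHom).prod (Units.map g₂.toMonoidHom)
    Function.Injective Φ ∧
      Set.range Φ =
        {p : R₁ˣ × R₂ˣ |
          Units.map f₁.toMonoidHom p.1 = Units.map f₂.toMonoidHom p.2} := by
  intro R g₁ g₂ Φ
  constructor
  · intro u v huv
    have h1 : (g₁ (u : R) : R₁) = g₁ (v : R) := congrArg (Units.val ∘ Prod.fst) huv
    have h2 : (g₂ (u : R) : R₂) = g₂ (v : R) := congrArg (Units.val ∘ Prod.snd) huv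
    exact Units.ext (Subtype.ext (Prod.ext h1 h2))
  · ext p
    constructor
    · rintro ⟨u, rfl⟩
      have := (u : R).2
      ext
      exact this
    · rintro hp
      have hval : f₁ ((p.1 : R₁)) = f₂ ((p.2 : R₂)) := congrArg Units.val hp
      have hinv : f₁ ((↑p.1⁻¹ : R₁)) = f₂ ((↑p.2⁻¹ : R₂)) := by
        have := congrArg Units.val (congrArg Inv.inv hp)
        simpa using this
      refine ⟨⟨⟨((p.1 : R₁), (p.2 : R₂)), hval⟩,
        ⟨((↑p.1⁻¹ : R₁), (↑p.2⁻¹ : R₂)), hinv⟩, ?_, ?_⟩, ?_⟩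
      · ext <;> simp [Subring.coe_mul]
      · ext <;> simp [Subring.coe_mul]
      · ext <;> rfl
end

section
/- Let k = Q, a = 2, b = 17, c = 34. Then the scheme Z ⊂ P^1_Q defined by (x²−2y²)(x²−17y²)(x²−34y²) = 0 has no Q-rational points but has Q_p-points for all primes p and real points, i.e., 2, 17 or 34 is a square in every completion Q_v of Q, while none of 2, 17, 34 is a square in Q. -/
open Polynomial in
lemma hensel_sq (p : ℕ) [Fact p.Prime] (a r : ℤ_[p])
    (h : ‖r * r - a‖ < ‖2 * r‖ ^ 2) : IsSquare ((a : ℚ_[p])) := by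
  have heval : (X ^ 2 - C a).eval r = r * r - a := by simp [sq]
  have hd : ((X ^ 2 - C a).derivative).eval r = 2 * r := by simp [two_mul]; ring
  obtain ⟨z, hz, -⟩ := hensels_lemma (F := X ^ 2 - C a) (a := r)
    (by rw [coe_aeval_eq_eval, heval, hd]; exact h)
  have hz' : z * z = a := by
    have := hz
    simp [sq] at this
    linear_combination this
  refine ⟨(z : ℚ_[p]), ?_⟩
  rw [← hz']
  push_cast
  ring

lemma padic_isSquare_of_zmod (p : ℕ) [hp : Fact p.Prime] (a : ℤ) (hp2 : p ≠ 2)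
    (ha : ((a : ZMod p)) ≠ 0) (h : IsSquare ((a : ZMod p))) :
    IsSquare (((a : ℤ) : ℚ_[p])) := by
  obtain ⟨x, hx⟩ := h
  have hx0 : x ≠ 0 := by
    rintro rfl; simp at hx; exact ha hx
  set r : ℤ_[p] := ((x.val : ℕ) : ℤ_[p]) with hr
  have htoZ : PadicInt.toZMod r = x := by
    rw [hr, map_natCast, ZMod.natCast_val, ZMod.cast_id]
  have hkey : ‖r * r - (a : ℤ_[p])‖ < 1 := by
    have hmem : r * r - (a : ℤ_[p]) ∈ RingHom.ker (PadicInt.toZMod (p := p)) := by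
      simp [RingHom.mem_ker, htoZ, hx]
    rw [PadicInt.ker_toZMod, PadicInt.maximalIdeal_eq_span_p,
      Ideal.mem_span_singleton, ← PadicInt.norm_lt_one_iff_dvd] at hmem
    exact hmem
  have hnr : ‖r‖ = 1 := by
    refine le_antisymm r.norm_le_one ?_
    by_contra hlt
    push_neg at hlt
    have : r ∈ RingHom.ker (PadicInt.toZMod (p := p)) := by
      rw [PadicInt.ker_toZMod, PadicInt.maximalIdeal_eq_span_p,
        Ideal.mem_span_singleton, ← PadicInt.norm_lt_one_iff_dvd]
      exact hlt
    rw [RingHom.mem_ker, htoZ] at this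
    exact hx0 this
  have hn2 : ‖(2 : ℤ_[p])‖ = 1 := by
    refine le_antisymm (PadicInt.norm_le_one 2) ?_
    by_contra hlt
    push_neg at hlt
    have : (2 : ℤ_[p]) ∈ RingHom.ker (PadicInt.toZMod (p := p)) := by
      rw [PadicInt.ker_toZMod, PadicInt.maximalIdeal_eq_span_p,
        Ideal.mem_span_singleton, ← PadicInt.norm_lt_one_iff_dvd]
      exact hlt
    rw [RingHom.mem_ker] at this
    have h2 : ((2 : ℕ) : ZMod p) = 0 := by
      rw [Nat.cast_ofNat, ← this, map_ofNat]
    have hdvd := (ZMod.natCast_eq_zero_iff 2 p).mp h2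
    exact hp2 ((Nat.prime_dvd_prime_iff_eq hp.out Nat.prime_two).mp hdvd)
  have := hensel_sq p (a : ℤ_[p]) r (by
    rw [norm_mul, hn2, hnr]
    simpa using hkey)
  simpa using this

lemma real_sqrt2 : IsSquare (2 : ℝ) :=
  ⟨Real.sqrt 2, (Real.mul_self_sqrt (by norm_num)).symm⟩

/-- The zero-dimensional scheme `Z ⊂ P¹_ℚ` cut out by
`(x² − 2y²)(x² − 17y²)(x² − 34y²) = 0` has points in every completion of `ℚ`
but no rational points: none of `2, 17, 34` is a square in `ℚ`, yet for every
prime `p` one of `2, 17, 34` is a square in `ℚ_p`, and one of them is a square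
in `ℝ`. -/
theorem stmt_8 :
    (¬ IsSquare (2 : ℚ)) ∧ (¬ IsSquare (17 : ℚ)) ∧ (¬ IsSquare (34 : ℚ)) ∧
      (∀ (p : ℕ) [Fact p.Prime],
        IsSquare (2 : ℚ_[p]) ∨ IsSquare (17 : ℚ_[p]) ∨ IsSquare (34 : ℚ_[p])) ∧
      (IsSquare (2 : ℝ) ∨ IsSquare (17 : ℝ) ∨ IsSquare (34 : ℝ)) := by
  have hnat : ∀ n : ℕ, IsSquare (n : ℚ) → IsSquare n := fun n =>
    Rat.isSquare_natCast_iff.mp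
  have hns : ∀ n : ℕ, n = 2 ∨ n = 17 ∨ n = 34 → ¬ IsSquare n := by
    rintro n hn ⟨r, hr⟩
    have hn34 : n ≤ 34 := by omega
    have hr6 : r ≤ 6 := by nlinarith
    interval_cases r <;> omega
  refine ⟨?_, ?_, ?_, ?_, Or.inl real_sqrt2⟩
  · intro h; exact hns 2 (by norm_num) (hnat 2 (by exact_mod_cast h))
  · intro h; exact hns 17 (by norm_num) (hnat 17 (by exact_mod_cast h))
  · intro h; exact hns 34 (by norm_num) (hnat 34 (by exact_mod_cast h))
  intro p hp
  by_cases hp2 : p = 2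
  · subst hp2
    -- 17 is a square in ℚ_2 by Hensel from r = 1
    refine Or.inr (Or.inl ?_)
    have h := hensel_sq 2 (17 : ℤ_[2]) 1 ?_
    · exact_mod_cast h
    · have h16 : (1 : ℤ_[2]) * 1 - 17 = -(2 ^ 4) := by ring
      rw [h16]
      have hp2 : ‖(2 : ℤ_[2])‖ = (2 : ℝ)⁻¹ := by
        have := PadicInt.norm_p (p := 2)
        simpa using this
      have hn : ‖(-(2 ^ 4) : ℤ_[2])‖ = (2 : ℝ)⁻¹ ^ 4 := by
        rw [norm_neg, norm_pow, hp2]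
      have hn2 : ‖(2 * 1 : ℤ_[2])‖ ^ 2 = (2 : ℝ)⁻¹ ^ 2 := by
        rw [mul_one, hp2]
      rw [hn, hn2]
      norm_num
  by_cases hp17 : p = 17
  · subst hp17
    refine Or.inl ?_
    have ha2 : ((2 : ℤ) : ZMod 17) ≠ 0 := by
      intro h
      rw [ZMod.intCast_zmod_eq_zero_iff_dvd] at h
      norm_num at h
    have hsq2 : IsSquare ((2 : ℤ) : ZMod 17) := ⟨((6 : ℤ) : ZMod 17), by
      rw [← Int.cast_mul, ZMod.intCast_eq_intCast_iff]
      decide⟩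
    have h := padic_isSquare_of_zmod 17 2 (by norm_num) ha2 hsq2
    simpa using h
  -- odd prime p ∉ {2, 17}
  have h2ne : ((2 : ℤ) : ZMod p) ≠ 0 := by
    intro h
    have hd := (ZMod.intCast_zmod_eq_zero_iff_dvd 2 p).mp h
    have hd2 : p ∣ 2 := by exact_mod_cast hd
    exact hp2 ((Nat.prime_dvd_prime_iff_eq hp.out Nat.prime_two).mp hd2)
  have h17ne : ((17 : ℤ) : ZMod p) ≠ 0 := by
    intro h
    have := (ZMod.intCast_zmod_eq_zero_iff_dvd 17 p).mp h
    have hd : p ∣ 17 := by exact_mod_cast this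
    have := (Nat.prime_dvd_prime_iff_eq hp.out (by norm_num)).mp hd
    exact hp17 this
  have h34ne : ((34 : ℤ) : ZMod p) ≠ 0 := by
    have : ((34 : ℤ) : ZMod p) = ((2 : ℤ) : ZMod p) * ((17 : ℤ) : ZMod p) := by
      push_cast; ring
    rw [this]
    exact mul_ne_zero h2ne h17ne
  have hmul : legendreSym p 34 = legendreSym p 2 * legendreSym p 17 := by
    rw [show (34 : ℤ) = 2 * 17 by norm_num, legendreSym.mul]
  have hpm : ∀ a : ℤ, ((a : ZMod p)) ≠ 0 → legendreSym p a = 1 ∨ legendreSym p a = -1 := by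
    intro a ha
    have := legendreSym.sq_one p ha
    rw [sq] at this
    exact Int.eq_one_or_neg_one_of_mul_eq_one this
  have key : legendreSym p 2 = 1 ∨ legendreSym p 17 = 1 ∨ legendreSym p 34 = 1 := by
    rcases hpm 2 h2ne with h2 | h2
    · exact Or.inl h2
    rcases hpm 17 h17ne with h17 | h17
    · exact Or.inr (Or.inl h17)
    refine Or.inr (Or.inr ?_)
    rw [hmul, h2, h17]; norm_num
  rcases key with h | h | h
  · refine Or.inl ?_
    have := padic_isSquare_of_zmod p 2 hp2 h2ne ((legendreSym.eq_one_iff p h2ne).mp h)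
    simpa using this
  · refine Or.inr (Or.inl ?_)
    have := padic_isSquare_of_zmod p 17 hp2 h17ne ((legendreSym.eq_one_iff p h17ne).mp h)
    simpa using this
  · refine Or.inr (Or.inr ?_)
    have := padic_isSquare_of_zmod p 34 hp2 h34ne ((legendreSym.eq_one_iff p h34ne).mp h)
    simpa using this
end
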